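/- Let (a_i) be the gap sequence a_{2^j(2m+1)} = (1/α)^j for 0 < α < 1/2, and let A(m,n) = Σ_{i=m}^{m+n−1} a_i. Then for all n, s > 0, A(1,n) ≤ A(s,n); i.e., the sum of the first n terms is minimal among all sums of n consecutive terms. -/

import Mathlib

/-- The gap sequence: `a_i = (1/α)^j` where `i = 2^j(2m+1)`. -/
noncomputable def gapSeq (α : ℝ) (i : ℕ) : ℝ := α⁻¹ ^ padicValNat 2 i

/-- `A(m,n) = Σ_{i=m}^{m+n-1} a_i`. -/
noncomputable def gapSum (α : ℝ) (m n : ℕ) : ℝ := ∑ i ∈ Finset.Ico m (m + n), gapSeq α i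

open Finset

private noncomputable def gapC (β : ℝ) : ℕ → ℝ
  | 0 => 1
  | k + 1 => β ^ (k + 1) - β ^ k

private lemma gapC_nonneg {β : ℝ} (hβ : 1 ≤ β) (k : ℕ) : 0 ≤ gapC β k := by
  cases k with
  | zero => norm_num [gapC]
  | succ k =>
    simp only [gapC, sub_nonneg]
    exact pow_le_pow_right₀ hβ (Nat.le_succ k)

private lemma gapC_telescope (β : ℝ) (v : ℕ) :
    ∑ k ∈ range (v + 1), gapC β k = β ^ v := by
  induction v with
  | zero => simp [gapC]
  | succ v ih => rw [Finset.sum_range_succ, ih]; simp [gapC]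

/-- key decomposition of `β ^ v₂(i)`. -/
private lemma gapSeq_eq_sum {β : ℝ} {K i : ℕ} (hi : 0 < i) (hiK : i < 2 ^ K) :
    β ^ padicValNat 2 i = ∑ k ∈ range K, if 2 ^ k ∣ i then gapC β k else 0 := by
  set v := padicValNat 2 i with hv
  have hvK : v < K := by
    have h1 : 2 ^ v ≤ i := Nat.le_of_dvd hi pow_padicValNat_dvd
    have := lt_of_le_of_lt h1 hiK
    exact (Nat.pow_lt_pow_iff_right (by norm_num)).mp this
  have hfilter : {k ∈ range K | 2 ^ k ∣ i} = range (v + 1) := by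
    ext k
    simp only [mem_filter, mem_range]
    constructor
    · rintro ⟨-, hdvd⟩
      have : k ≤ v := by
        haveI : Fact (Nat.Prime 2) := ⟨Nat.prime_two⟩
        exact ((padicValNat_dvd_iff_le hi.ne').mp hdvd)
      omega
    · intro hk
      refine ⟨by omega, dvd_trans (pow_dvd_pow 2 (by omega)) pow_padicValNat_dvd⟩
  rw [← Finset.sum_filter, hfilter, gapC_telescope]

/-- number of multiples of `2^k` in a window. -/
private lemma count_eq {s n k : ℕ} (hs : 0 < s) :
    #{i ∈ Ico s (s + n) | 2 ^ k ∣ i} = (s - 1 + n) / 2 ^ k - (s - 1) / 2 ^ k := by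
  have h1 : Finset.Ico s (s + n) = Finset.Ioc (s - 1) (s - 1 + n) := by
    ext x; simp only [mem_Ico, mem_Ioc]; omega
  have hunion : Finset.Ioc 0 (s - 1) ∪ Finset.Ioc (s - 1) (s - 1 + n)
      = Finset.Ioc 0 (s - 1 + n) := Finset.Ioc_union_Ioc_eq_Ioc (by omega) (by omega)
  have hdisj : Disjoint (Finset.Ioc 0 (s - 1)) (Finset.Ioc (s - 1) (s - 1 + n)) := by
    rw [Finset.disjoint_left]; intro x hx hx'
    simp only [mem_Ioc] at hx hx'; omega
  have hcard : #{i ∈ Finset.Ioc 0 (s - 1) | 2 ^ k ∣ i}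
      + #{i ∈ Finset.Ioc (s - 1) (s - 1 + n) | 2 ^ k ∣ i}
      = #{i ∈ Finset.Ioc 0 (s - 1 + n) | 2 ^ k ∣ i} := by
    rw [← Finset.card_union_of_disjoint (Finset.disjoint_filter_filter hdisj),
      ← Finset.filter_union, hunion]
  rw [h1]
  rw [Nat.Ioc_filter_dvd_card_eq_div, Nat.Ioc_filter_dvd_card_eq_div] at hcard
  omega

private lemma count_le {s n k : ℕ} (hs : 0 < s) :
    #{i ∈ Ico 1 (1 + n) | 2 ^ k ∣ i} ≤ #{i ∈ Ico s (s + n) | 2 ^ k ∣ i} := by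
  rw [count_eq hs, count_eq Nat.one_pos]
  simp only [Nat.sub_self, Nat.zero_add, Nat.zero_div, Nat.sub_zero]
  have hd : 0 < 2 ^ k := Nat.pow_pos (by norm_num)
  have : n / 2 ^ k + (s - 1) / 2 ^ k ≤ (s - 1 + n) / 2 ^ k := by
    rw [Nat.le_div_iff_mul_le hd, Nat.add_mul]
    have := Nat.div_mul_le_self n (2 ^ k)
    have := Nat.div_mul_le_self (s - 1) (2 ^ k)
    omega
  omega

/-- The sum of the first `n` terms of the gap sequence is minimal among all sums of `n`
consecutive terms: `A(1,n) ≤ A(s,n)` for all `n, s > 0`. -/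
theorem stmt15 (α : ℝ) (hα1 : 0 < α) (hα2 : α < 1 / 2) (n s : ℕ) (hn : 0 < n) (hs : 0 < s) :
    gapSum α 1 n ≤ gapSum α s n := by
  set β := α⁻¹ with hβdef
  have hβ : 1 ≤ β := by
    rw [hβdef, le_inv_comm₀ one_pos hα1]
    linarith
  set K := s + n with hK
  have hsum : ∀ t : ℕ, 0 < t → t ≤ s → gapSum α t n
      = ∑ k ∈ range K, gapC β k * #{i ∈ Ico t (t + n) | 2 ^ k ∣ i} := by
    intro t ht hts
    unfold gapSum gapSeq
    calc ∑ i ∈ Ico t (t + n), β ^ padicValNat 2 i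
        = ∑ i ∈ Ico t (t + n), ∑ k ∈ range K, (if 2 ^ k ∣ i then gapC β k else 0) := by
          refine Finset.sum_congr rfl fun i hi => ?_
          simp only [mem_Ico] at hi
          refine gapSeq_eq_sum (by omega) ?_
          have : K < 2 ^ K := Nat.lt_two_pow_self
          omega
      _ = ∑ k ∈ range K, ∑ i ∈ Ico t (t + n), (if 2 ^ k ∣ i then gapC β k else 0) :=
          Finset.sum_comm
      _ = ∑ k ∈ range K, gapC β k * #{i ∈ Ico t (t + n) | 2 ^ k ∣ i} := by
          refine Finset.sum_congr rfl fun k _ => ?_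
          rw [← Finset.sum_filter, Finset.sum_const, nsmul_eq_mul, mul_comm]
  rw [hsum 1 Nat.one_pos hs, hsum s hs le_rfl]
  refine Finset.sum_le_sum fun k _ => ?_
  exact mul_le_mul_of_nonneg_left (Nat.cast_le.mpr (count_le hs)) (gapC_nonneg hβ k)
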